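/- Let T>0, n ≥ 1, A ∈ ℝ^{n×n} and b ∈ ℝ^n be such that the pair (A,b) satisfies the Kalman rank condition rank[b, Ab, …, A^{n−1}b] = n, and let E ∈ ℝ^n be a nonzero output vector. Then there exists k* ∈ {1,…,n} such that for every function f : ℝ → ℝ of class C^{n−k*+1} with f^{(i)}(0) = 0 for all i = 0,1,…,n−k*, there exists a continuous (in particular square-integrable) control u : [0,T] → ℝ such that the state x(t) = ∫_0^t e^{A(t−s)} b u(s) ds satisfies ⟨E, x(t)⟩_{ℝ^n} = f(t) for every t ∈ [0,T]. -/

import Mathlib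

open MeasureTheory Matrix

namespace ScalarTracking

variable {n : ℕ}

attribute [local instance] Matrix.linftyOpNormedAddCommGroup Matrix.linftyOpNormedSpace
  Matrix.linftyOpNormedRing Matrix.linftyOpNormedAlgebra

noncomputable def entryCLM (i j : Fin n) : Matrix (Fin n) (Fin n) ℝ →L[ℝ] ℝ :=
  LinearMap.toContinuousLinearMap
    { toFun := fun M => M i j
      map_add' := fun _ _ => rfl
      map_smul' := fun _ _ => rfl }

theorem hasDerivAt_entry {M : ℝ → Matrix (Fin n) (Fin n) ℝ} {M' : Matrix (Fin n) (Fin n) ℝ}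
    {t : ℝ} (hM : HasDerivAt M M' t) (i j : Fin n) :
    HasDerivAt (fun t => M t i j) (M' i j) t :=
  (entryCLM i j).hasFDerivAt.comp_hasDerivAt t hM

theorem hasDerivAt_mulVec {M : ℝ → Matrix (Fin n) (Fin n) ℝ} {M' : Matrix (Fin n) (Fin n) ℝ}
    {v : ℝ → Fin n → ℝ} {v' : Fin n → ℝ} {t : ℝ}
    (hM : HasDerivAt M M' t) (hv : HasDerivAt v v' t) :
    HasDerivAt (fun t => M t *ᵥ v t) (M' *ᵥ v t + M t *ᵥ v') t := by
  rw [hasDerivAt_pi]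
  intro i
  have h : HasDerivAt (fun s => ∑ j, M s i j * v s j)
      (∑ j, (M' i j * v t j + M t i j * v' j)) t :=
    HasDerivAt.fun_sum fun j _ => (hasDerivAt_entry hM i j).mul (hasDerivAt_pi.mp hv j)
  have e1 : (fun s => (M s *ᵥ v s) i) = fun s => ∑ j, M s i j * v s j := by
    funext s; simp [Matrix.mulVec, dotProduct]
  rw [e1]
  refine h.congr_deriv ?_
  simp [Matrix.mulVec, dotProduct, Pi.add_apply, Finset.sum_add_distrib]

theorem hasDerivAt_dotProduct {c : Fin n → ℝ} {v : ℝ → Fin n → ℝ} {v' : Fin n → ℝ} {t : ℝ}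
    (hv : HasDerivAt v v' t) :
    HasDerivAt (fun t => c ⬝ᵥ v t) (c ⬝ᵥ v') t := by
  have h : HasDerivAt (fun s => ∑ j, c j * v s j) (∑ j, c j * v' j) t :=
    HasDerivAt.fun_sum fun j _ => (hasDerivAt_pi.mp hv j).const_mul (c j)
  simpa [dotProduct] using h

theorem continuous_mulVecFun {M : ℝ → Matrix (Fin n) (Fin n) ℝ} {v : ℝ → Fin n → ℝ}
    (hM : Continuous M) (hv : Continuous v) : Continuous fun t => M t *ᵥ v t := by
  refine continuous_pi fun i => ?_
  have e1 : (fun s => (M s *ᵥ v s) i) = fun s => ∑ j, M s i j * v s j := by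
    funext s; simp [Matrix.mulVec, dotProduct]
  rw [e1]
  exact continuous_finset_sum _ fun j _ =>
    ((entryCLM i j).continuous.comp hM).mul ((continuous_apply j).comp hv)

theorem exp_smul_add (C : Matrix (Fin n) (Fin n) ℝ) (a c : ℝ) :
    NormedSpace.exp (a • C) * NormedSpace.exp (c • C) = NormedSpace.exp ((a + c) • C) := by
  rw [← Matrix.exp_add_of_commute _ _ (((Commute.refl C).smul_left a).smul_right c), add_smul]

theorem exp_cancel (C : Matrix (Fin n) (Fin n) ℝ) (a : ℝ) (w : Fin n → ℝ) :
    NormedSpace.exp (a • C) *ᵥ (NormedSpace.exp ((-a) • C) *ᵥ w) = w := by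
  rw [Matrix.mulVec_mulVec, exp_smul_add, add_neg_cancel, zero_smul, NormedSpace.exp_zero,
    Matrix.one_mulVec]

theorem continuous_expFun (C : Matrix (Fin n) (Fin n) ℝ) :
    Continuous fun t : ℝ => NormedSpace.exp (t • C) :=
  NormedSpace.exp_continuous.comp (continuous_id.smul continuous_const)

theorem voc_hasDerivAt (C : Matrix (Fin n) (Fin n) ℝ) {w : ℝ → Fin n → ℝ} (hw : Continuous w)
    (t : ℝ) :
    HasDerivAt
      (fun τ => NormedSpace.exp (τ • C) *ᵥ ∫ s in (0:ℝ)..τ, NormedSpace.exp ((-s) • C) *ᵥ w s)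
      (C *ᵥ (NormedSpace.exp (t • C) *ᵥ ∫ s in (0:ℝ)..t, NormedSpace.exp ((-s) • C) *ᵥ w s)
        + w t) t := by
  have hφ : Continuous fun s => NormedSpace.exp ((-s) • C) *ᵥ w s :=
    continuous_mulVecFun (NormedSpace.exp_continuous.comp (continuous_neg.smul continuous_const)) hw
  have hI : HasDerivAt (fun τ => ∫ s in (0:ℝ)..τ, NormedSpace.exp ((-s) • C) *ᵥ w s)
      (NormedSpace.exp ((-t) • C) *ᵥ w t) t :=
    intervalIntegral.integral_hasDerivAt_right (hφ.intervalIntegrable _ _)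
      hφ.stronglyMeasurable.stronglyMeasurableAtFilter hφ.continuousAt
  have hX : HasDerivAt (fun τ : ℝ => NormedSpace.exp (τ • C))
      (C * NormedSpace.exp (t • C)) t := hasDerivAt_exp_smul_const' C t
  have h := hasDerivAt_mulVec hX hI
  convert h using 2
  · rw [← Matrix.mulVec_mulVec]
  · rw [exp_cancel]

theorem ode_unique (A : Matrix (Fin n) (Fin n) ℝ) {w : ℝ → Fin n → ℝ} {x z : ℝ → Fin n → ℝ}
    (hx : ∀ t, HasDerivAt x (A *ᵥ x t + w t) t)
    (hz : ∀ t, HasDerivAt z (A *ᵥ z t + w t) t)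
    (h0 : x 0 = z 0) : ∀ t, x t = z t := by
  set d : ℝ → Fin n → ℝ := fun t => x t - z t with hd_def
  have hd : ∀ t, HasDerivAt d (A *ᵥ d t) t := by
    intro t
    have h := (hx t).sub (hz t)
    have e : A *ᵥ x t + w t - (A *ᵥ z t + w t) = A *ᵥ d t := by
      simp [hd_def, Matrix.mulVec_sub]
    rwa [e] at h
  set p : ℝ → Fin n → ℝ := fun t => NormedSpace.exp ((-t) • A) *ᵥ d t with hp_def
  have hp : ∀ t, HasDerivAt p 0 t := by
    intro t
    have hX : HasDerivAt (fun τ : ℝ => NormedSpace.exp ((-τ) • A))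
        ((-1 : ℝ) • (A * NormedSpace.exp ((-t) • A))) t := by
      have h1 : HasDerivAt (fun τ : ℝ => NormedSpace.exp (τ • A))
          (A * NormedSpace.exp ((-t) • A)) (-t) := hasDerivAt_exp_smul_const' A (-t)
      have h2 : HasDerivAt (fun τ : ℝ => -τ) (-1 : ℝ) t := (hasDerivAt_id t).neg
      exact h1.scomp t h2
    have h := hasDerivAt_mulVec hX (hd t)
    have hc : Commute A (NormedSpace.exp ((-t) • A)) :=
      (((Commute.refl A).smul_right (-t)) : Commute A ((-t) • A)).exp_right
    have e : ((-1 : ℝ) • (A * NormedSpace.exp ((-t) • A))) *ᵥ d t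
        + NormedSpace.exp ((-t) • A) *ᵥ (A *ᵥ d t) = 0 := by
      rw [Matrix.mulVec_mulVec, ← hc.eq, ← Matrix.add_mulVec]
      simp
    rwa [e] at h
  have hdiff : Differentiable ℝ p := fun t => (hp t).differentiableAt
  have hconst : ∀ t, p t = p 0 := fun t =>
    is_const_of_deriv_eq_zero hdiff (fun s => (hp s).deriv) t 0
  have hp0 : p 0 = 0 := by
    simp [hp_def, hd_def, h0]
  intro t
  have hpt : NormedSpace.exp ((-t) • A) *ᵥ d t = 0 := (hconst t).trans hp0
  have : d t = 0 := by
    calc d t = NormedSpace.exp (t • A) *ᵥ (NormedSpace.exp ((-t) • A) *ᵥ d t) :=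
          (exp_cancel A t (d t)).symm
      _ = NormedSpace.exp (t • A) *ᵥ (0 : Fin n → ℝ) := by rw [hpt]
      _ = 0 := Matrix.mulVec_zero _
  have := sub_eq_zero.mp this
  exact this

theorem eq_of_hasDerivAt_eq {p q r : ℝ → ℝ} (hp : ∀ t, HasDerivAt p (r t) t)
    (hq : ∀ t, HasDerivAt q (r t) t) (h0 : p 0 = q 0) : p = q := by
  funext t
  have hd : ∀ s, HasDerivAt (fun t => p t - q t) 0 s := fun s => by
    simpa using (hp s).fun_sub (hq s)
  have hdiff : Differentiable ℝ (fun t => p t - q t) := fun s => (hd s).differentiableAt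
  have := is_const_of_deriv_eq_zero hdiff (fun s => (hd s).deriv) t 0
  have h0' : p 0 - q 0 = 0 := by rw [h0]; ring
  have : p t - q t = 0 := by rw [this, h0']
  linarith

theorem kalman_exists_nonzero {n : ℕ}
    (A : Matrix (Fin n) (Fin n) ℝ) (b : Fin n → ℝ)
    (hKalman : (Matrix.of fun (i j : Fin n) => ((A ^ (j : ℕ)) *ᵥ b) i).rank = n)
    (E : Fin n → ℝ) (hE : E ≠ 0) : ∃ j, j < n ∧ E ⬝ᵥ (A ^ j *ᵥ b) ≠ 0 := by
  by_contra hcon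
  push_neg at hcon
  apply hE
  set K : Matrix (Fin n) (Fin n) ℝ := Matrix.of fun (i j : Fin n) => ((A ^ (j : ℕ)) *ᵥ b) i with hK
  have hrankT : Kᵀ.rank = n := by rw [Matrix.rank_transpose]; exact hKalman
  have hrange : LinearMap.range (Kᵀ).mulVecLin = ⊤ := by
    apply Submodule.eq_top_of_finrank_eq
    rw [← Matrix.rank]
    simp [hrankT]
  have hsurj : Function.Surjective (Kᵀ).mulVecLin := LinearMap.range_eq_top.mp hrange
  have hinj : Function.Injective (Kᵀ).mulVecLin :=
    (LinearMap.injective_iff_surjective).mpr hsurj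
  have hzero : (Kᵀ).mulVecLin E = (Kᵀ).mulVecLin 0 := by
    rw [map_zero]
    funext j
    simp only [Matrix.mulVecLin_apply, Matrix.mulVec, dotProduct, Matrix.transpose_apply]
    have h2 := hcon j j.isLt
    simp only [dotProduct] at h2
    show ∑ x : Fin n, K x j * E x = (0 : Fin n → ℝ) j
    rw [Pi.zero_apply, ← h2]
    apply Finset.sum_congr rfl
    intro i _
    simp [hK, mul_comm]
  exact hinj hzero

end ScalarTracking

open ScalarTracking

/-- tracking controllability for scalar controls: if (A,b) satisfies the
Kalman rank condition, there is an index k* ∈ {1,…,n} such that every target f of class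
C^{n-k*+1} with vanishing derivatives up to order n-k* at 0 can be tracked, i.e.
⟨E, x(t)⟩ = f(t) on [0,T], with a continuous scalar control. -/
theorem scalar_tracking_controllability
    (T : ℝ) (hT : 0 < T) (n : ℕ) (hn : 1 ≤ n)
    (A : Matrix (Fin n) (Fin n) ℝ) (b : Fin n → ℝ)
    (hKalman : (Matrix.of fun (i j : Fin n) => ((A ^ (j : ℕ)) *ᵥ b) i).rank = n)
    (E : Fin n → ℝ) (hE : E ≠ 0) :
    ∃ kstar : ℕ, 1 ≤ kstar ∧ kstar ≤ n ∧
      ∀ f : ℝ → ℝ, ContDiff ℝ (n - kstar + 1) f →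
        (∀ i : ℕ, i ≤ n - kstar → iteratedDeriv i f 0 = 0) →
        ∃ u : ℝ → ℝ, ContinuousOn u (Set.Icc 0 T) ∧
          ∀ t ∈ Set.Icc (0:ℝ) T,
            E ⬝ᵥ (∫ s in (0:ℝ)..t, NormedSpace.exp ((t - s) • A) *ᵥ (u s • b)) = f t := by
    classical
  obtain ⟨j0, hj0n, hj0⟩ := kalman_exists_nonzero A b hKalman E hE
  have hex : ∃ j, E ⬝ᵥ (A ^ j *ᵥ b) ≠ 0 := ⟨j0, hj0⟩
  set m := Nat.find hex with hm_def
  have hγ : E ⬝ᵥ (A ^ m *ᵥ b) ≠ 0 := Nat.find_spec hex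
  have hmn : m < n := lt_of_le_of_lt (Nat.find_min' hex hj0) hj0n
  have hmin : ∀ j, j < m → E ⬝ᵥ (A ^ j *ᵥ b) = 0 := fun j hj =>
    not_not.mp (Nat.find_min hex hj)
  refine ⟨n - m, by omega, by omega, ?_⟩
  intro f hf hf0
  have hnm : n - (n - m) = m := by omega
  rw [hnm] at hf0
  have hcast : ((n : WithTop ℕ∞) - ((n - m : ℕ) : WithTop ℕ∞) + 1) = (((m + 1 : ℕ)) : WithTop ℕ∞) := by
    rw [← WithTop.coe_natCast (α := ℕ∞) n, ← WithTop.coe_natCast (α := ℕ∞) (n - m),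
      ← WithTop.coe_sub, ← ENat.coe_sub, show n - (n - m) = m from by omega]
    push_cast; ring
  rw [hcast] at hf
  set γ := E ⬝ᵥ (A ^ m *ᵥ b) with hγ_def
  set g : ℝ → ℝ := iteratedDeriv (m + 1) f with hg_def
  have hgc : Continuous g := hf.continuous_iteratedDeriv (m + 1) (by exact_mod_cast le_rfl)
  set c : Fin n → ℝ := E ᵥ* (A ^ (m + 1)) with hc_def
  set C : Matrix (Fin n) (Fin n) ℝ := A - γ⁻¹ • Matrix.vecMulVec b c with hC_def
  set w : ℝ → Fin n → ℝ := fun s => (γ⁻¹ * g s) • b with hw_def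
  have hwc : Continuous w := (continuous_const.mul hgc).smul continuous_const
  set x : ℝ → Fin n → ℝ :=
    fun t => NormedSpace.exp (t • C) *ᵥ ∫ s in (0:ℝ)..t, NormedSpace.exp ((-s) • C) *ᵥ w s
    with hx_def
  have hx0 : x 0 = 0 := by simp [hx_def]
  have hxC : ∀ t, HasDerivAt x (C *ᵥ x t + w t) t := fun t => voc_hasDerivAt C hwc t
  have hxcont : Continuous x := by
    rw [continuous_iff_continuousAt]; exact fun t => (hxC t).continuousAt
  set u : ℝ → ℝ := fun t => γ⁻¹ * (g t - c ⬝ᵥ x t) with hu_def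
  have hdotc : Continuous fun t => c ⬝ᵥ x t := by
    simp only [dotProduct]
    exact continuous_finset_sum _ fun i _ =>
      continuous_const.mul ((continuous_apply i).comp hxcont)
  have huc : Continuous u := continuous_const.mul (hgc.sub hdotc)
  have hvmv : ∀ v : Fin n → ℝ, Matrix.vecMulVec b c *ᵥ v = (c ⬝ᵥ v) • b := by
    intro v; funext i
    simp only [Matrix.vecMulVec, Matrix.mulVec, dotProduct, Matrix.of_apply,
      Pi.smul_apply, smul_eq_mul, Finset.sum_mul, Finset.mul_sum]
    exact Finset.sum_congr rfl fun j _ => by ring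
  have hxA : ∀ t, HasDerivAt x (A *ᵥ x t + u t • b) t := by
    intro t
    have h := hxC t
    have e : C *ᵥ x t + w t = A *ᵥ x t + u t • b := by
      rw [hC_def, Matrix.sub_mulVec, Matrix.smul_mulVec, hvmv]
      funext i
      simp only [Pi.add_apply, Pi.sub_apply, Pi.smul_apply, smul_eq_mul, hu_def, hw_def]
      ring
    rwa [e] at h
  set Y : ℕ → ℝ → ℝ := fun i t => (E ᵥ* (A ^ i)) ⬝ᵥ x t with hY_def
  have hY0 : ∀ i, Y i 0 = 0 := fun i => by simp [hY_def, hx0]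
  have hYd : ∀ i t, HasDerivAt (Y i)
      ((E ᵥ* (A ^ (i + 1))) ⬝ᵥ x t + u t * (E ⬝ᵥ (A ^ i *ᵥ b))) t := by
    intro i t
    have h := hasDerivAt_dotProduct (c := E ᵥ* (A ^ i)) (hxA t)
    have e : (E ᵥ* (A ^ i)) ⬝ᵥ (A *ᵥ x t + u t • b)
        = (E ᵥ* (A ^ (i + 1))) ⬝ᵥ x t + u t * (E ⬝ᵥ (A ^ i *ᵥ b)) := by
      rw [dotProduct_add, Matrix.dotProduct_mulVec, Matrix.vecMul_vecMul, ← pow_succ,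
        dotProduct_smul, smul_eq_mul, Matrix.dotProduct_mulVec E (A ^ i) b]
    rwa [e] at h
  have hYm : ∀ t, HasDerivAt (Y m) (g t) t := by
    intro t
    have h := hYd m t
    have e : (E ᵥ* (A ^ (m + 1))) ⬝ᵥ x t + u t * (E ⬝ᵥ (A ^ m *ᵥ b)) = g t := by
      rw [← hc_def, ← hγ_def, hu_def]
      field_simp
      ring
    rwa [e] at h
  have hγ' : γ ≠ 0 := hγ
  have hfd : ∀ i, i ≤ m → ∀ t, HasDerivAt (iteratedDeriv i f) (iteratedDeriv (i + 1) f t) t := by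
    intro i hi t
    have hdiff : Differentiable ℝ (iteratedDeriv i f) :=
      hf.differentiable_iteratedDeriv i (by exact_mod_cast Nat.lt_succ_of_le hi)
    rw [iteratedDeriv_succ]
    exact (hdiff t).hasDerivAt
  have key : ∀ k i, i + k = m → Y i = iteratedDeriv i f := by
    intro k
    induction k with
    | zero =>
      intro i hi
      have him : i = m := by omega
      subst him
      refine eq_of_hasDerivAt_eq (r := g) hYm (fun t => hfd m le_rfl t) ?_
      rw [hY0 m, hf0 m le_rfl]
    | succ k ih =>
      intro i hi
      have heq := ih (i + 1) (by omega)
      have hilt : i < m := by omega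
      refine eq_of_hasDerivAt_eq (r := fun t => iteratedDeriv (i + 1) f t)
        ?_ (fun t => hfd i (le_of_lt hilt) t) ?_
      · intro t
        have h := hYd i t
        rw [hmin i hilt, mul_zero, add_zero] at h
        have e : (E ᵥ* (A ^ (i + 1))) ⬝ᵥ x t = iteratedDeriv (i + 1) f t := by
          rw [← heq]
        rwa [e] at h
      · rw [hY0 i, hf0 i (le_of_lt hilt)]
  have hY0f : Y 0 = f := by
    have h := key m 0 (by omega)
    rwa [iteratedDeriv_zero] at h
  refine ⟨u, huc.continuousOn, ?_⟩
  intro t ht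
  have hvcont : Continuous fun s => NormedSpace.exp ((-s) • A) *ᵥ (u s • b) :=
    continuous_mulVecFun ((continuous_expFun A).comp continuous_neg)
      (huc.smul continuous_const)
  set zt : ℝ → Fin n → ℝ := fun τ =>
    NormedSpace.exp (τ • A) *ᵥ ∫ s in (0:ℝ)..τ, NormedSpace.exp ((-s) • A) *ᵥ (u s • b)
    with hzt_def
  have hztd : ∀ τ, HasDerivAt zt (A *ᵥ zt τ + u τ • b) τ := fun τ =>
    voc_hasDerivAt A (w := fun s => u s • b) (huc.smul continuous_const) τ
  have hzt0 : zt 0 = 0 := by simp [hzt_def]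
  have hxz : ∀ τ, x τ = zt τ :=
    ode_unique A (w := fun τ => u τ • b) hxA hztd (by rw [hx0, hzt0])
  set L : (Fin n → ℝ) →L[ℝ] (Fin n → ℝ) :=
    LinearMap.toContinuousLinearMap (Matrix.mulVecLin (NormedSpace.exp (t • A))) with hL_def
  have hL : ∀ v, L v = NormedSpace.exp (t • A) *ᵥ v := fun v => by
    simp [hL_def]
  have h1 : ∀ s ∈ Set.uIcc (0:ℝ) t, NormedSpace.exp ((t - s) • A) *ᵥ (u s • b)
      = L (NormedSpace.exp ((-s) • A) *ᵥ (u s • b)) := by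
    intro s _
    rw [hL, Matrix.mulVec_mulVec, exp_smul_add, show t + -s = t - s from by ring]
  have hint : (∫ s in (0:ℝ)..t, NormedSpace.exp ((t - s) • A) *ᵥ (u s • b)) = zt t := by
    rw [intervalIntegral.integral_congr h1,
      L.intervalIntegral_comp_comm (hvcont.intervalIntegrable _ _), hL, hzt_def]
  rw [hint, ← hxz t]
  have h2 : Y 0 t = f t := by rw [hY0f]
  calc E ⬝ᵥ x t = (E ᵥ* (1 : Matrix (Fin n) (Fin n) ℝ)) ⬝ᵥ x t := by rw [Matrix.vecMul_one]
    _ = Y 0 t := by rw [hY_def]; simp [pow_zero]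
    _ = f t := h2
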